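/- arXiv:2003.04009 — 3 statements merged into one kernel-verified Lean document; each statement's English description precedes it below -/
import Mathlib

section
/- For all real ν with 3 ≤ ν, one has (1 - 2^(-1/(ν-1)))^(ν-1) · (1 + 1/(ν-1))^(ν/2) ≤ 1. -/
theorem stmt_3 (ν : ℝ) (hν : 3 ≤ ν) :
    (1 - (2:ℝ) ^ (-(1 / (ν - 1)))) ^ (ν - 1) * (1 + 1 / (ν - 1)) ^ (ν / 2) ≤ 1 := by
  set s := ν - 1 with hs
  have hs2 : (2:ℝ) ≤ s := by linarith
  have hspos : (0:ℝ) < s := by linarith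
  have h2pow : (2:ℝ) ^ (-(1/s)) < 1 :=
    Real.rpow_lt_one_of_one_lt_of_neg one_lt_two (by
      have : 0 < 1/s := by positivity
      linarith)
  have hbasepos : 0 < 1 - (2:ℝ) ^ (-(1/s)) := by linarith
  -- lower bound 2^(-1/s) ≥ 0.7
  have hmono : (2:ℝ) ^ (-(1/2):ℝ) ≤ (2:ℝ) ^ (-(1/s)) := by
    apply Real.rpow_le_rpow_of_exponent_le one_le_two
    have h1 : 1/s ≤ 1/2 := by
      rw [div_le_div_iff₀ hspos (by norm_num)]
      linarith
    linarith
  have hsq : ((2:ℝ) ^ (-(1/2):ℝ)) ^ (2:ℕ) = 1/2 := by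
    rw [← Real.rpow_natCast ((2:ℝ) ^ (-(1/2):ℝ)) 2, ← Real.rpow_mul (by norm_num)]
    norm_num
  have h07 : (0.7:ℝ) ≤ (2:ℝ) ^ (-(1/2):ℝ) := by
    nlinarith [Real.rpow_nonneg (by norm_num : (0:ℝ) ≤ 2) (-(1/2):ℝ)]
  have hbase : 1 - (2:ℝ) ^ (-(1/s)) ≤ 0.3 := by linarith
  -- first factor ≤ 0.09
  have hA1 : (1 - (2:ℝ) ^ (-(1/s))) ^ s ≤ (1 - (2:ℝ) ^ (-(1/s))) ^ (2:ℝ) :=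
    Real.rpow_le_rpow_of_exponent_ge hbasepos (by linarith) hs2
  have hA2 : (1 - (2:ℝ) ^ (-(1/s))) ^ (2:ℝ) ≤ (0.3:ℝ) ^ (2:ℝ) :=
    Real.rpow_le_rpow (le_of_lt hbasepos) hbase (by norm_num)
  have hA3 : (0.3:ℝ) ^ (2:ℝ) = 0.09 := by
    rw [show (2:ℝ) = ((2:ℕ):ℝ) by norm_num, Real.rpow_natCast]
    norm_num
  have hA : (1 - (2:ℝ) ^ (-(1/s))) ^ s ≤ 0.09 := by
    calc (1 - (2:ℝ) ^ (-(1/s))) ^ s ≤ (0.3:ℝ) ^ (2:ℝ) := le_trans hA1 hA2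
    _ = 0.09 := hA3
  -- second factor ≤ exp 1
  have hBbase : (0:ℝ) < 1 + 1/s := by positivity
  have hB : (1 + 1/s) ^ (ν/2) ≤ Real.exp 1 := by
    rw [Real.rpow_def_of_pos hBbase]
    apply Real.exp_le_exp.mpr
    have hlog : Real.log (1 + 1/s) ≤ 1/s := by
      have := Real.log_le_sub_one_of_pos hBbase
      linarith
    have h1 : ν/2 * Real.log (1 + 1/s) ≤ ν/2 * (1/s) :=
      mul_le_mul_of_nonneg_left hlog (by linarith)
    have h2 : ν/2 * (1/s) ≤ 1 := by
      rw [div_mul_div_comm, div_le_one (by positivity)]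
      nlinarith
    calc Real.log (1 + 1/s) * (ν/2) = ν/2 * Real.log (1 + 1/s) := by ring
    _ ≤ 1 := le_trans h1 h2
  have hexp3 : Real.exp 1 < 3 := by
    have := Real.exp_one_lt_d9
    linarith
  have hApos : 0 ≤ (1 - (2:ℝ) ^ (-(1/s))) ^ s := Real.rpow_nonneg (le_of_lt hbasepos) s
  have hBpos : 0 ≤ (1 + 1/s) ^ (ν/2) := Real.rpow_nonneg (le_of_lt hBbase) _
  calc (1 - (2:ℝ) ^ (-(1/s))) ^ s * (1 + 1/s) ^ (ν/2)
      ≤ 0.09 * 3 := by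
        apply mul_le_mul hA (le_trans hB (le_of_lt hexp3)) hBpos (by norm_num)
  _ ≤ 1 := by norm_num
end

section
/- Let p, ν be reals with n < p ≤ n+1 ≤ ν and n ≥ 3, and define C(p,n) = 2·((p-1)/p)^(p/2)·((n-1)(p-2)/(p-n))^(p/2-1). Then 2^(p-2)·(1/(p-1))^(p-1)·C(p,n) ≤ (2^n/n)·(p-n)^(1-p/2). -/
theorem stmt_4 (n : ℕ) (hn : 3 ≤ n) (p ν : ℝ) (hp : (n : ℝ) < p) (hpn : p ≤ (n : ℝ) + 1)
    (hν : (n : ℝ) + 1 ≤ ν) :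
    2 ^ (p - 2) * (1 / (p - 1)) ^ (p - 1) *
        (2 * ((p - 1) / p) ^ (p / 2) * (((n : ℝ) - 1) * (p - 2) / (p - (n : ℝ))) ^ (p / 2 - 1))
      ≤ ((2 : ℝ) ^ (n : ℝ) / (n : ℝ)) * (p - (n : ℝ)) ^ (1 - p / 2) := by
  have hx : (3:ℝ) ≤ (n:ℝ) := by exact_mod_cast hn
  have hp3 : 3 < p := lt_of_le_of_lt hx hp
  have hp1 : 0 < p - 1 := by linarith
  have hp2 : 0 < p - 2 := by linarith
  have hpp : 0 < p := by linarith
  have hn1 : (0:ℝ) < (n:ℝ) - 1 := by linarith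
  have hxpos : (0:ℝ) < (n:ℝ) := by linarith
  have ha : 0 < p - (n:ℝ) := by linarith
  have hB : 0 < ((n:ℝ) - 1) * (p - 2) := mul_pos hn1 hp2
  set B : ℝ := ((n:ℝ) - 1) * (p - 2) with hBdef
  -- split the quotient power
  have hsplit : (B / (p - (n:ℝ))) ^ (p/2 - 1)
      = B ^ (p/2 - 1) * (p - (n:ℝ)) ^ (1 - p/2) := by
    rw [Real.div_rpow hB.le ha.le, div_eq_mul_inv, ← Real.rpow_neg ha.le]
    congr 1
    ring
  rw [hsplit]
  have hAnn : (0:ℝ) ≤ (p - (n:ℝ)) ^ (1 - p/2) := Real.rpow_nonneg ha.le _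
  -- key inequality without the (p-n) factor
  have key : 2 ^ (p-2) * (1/(p-1)) ^ (p-1) * (2 * ((p-1)/p) ^ (p/2) * B ^ (p/2-1))
      ≤ (2:ℝ) ^ (n:ℝ) / (n:ℝ) := by
    have e1 : (2:ℝ) ^ (p-2) * 2 = 2 ^ (p-1) := by
      rw [show p - 1 = (p-2) + 1 by ring, Real.rpow_add (by norm_num : (0:ℝ) < 2),
        Real.rpow_one]
    have e2 : (1/(p-1)) ^ (p-1) * ((p-1)/p) ^ (p/2)
        = (p-1) ^ (1 - p/2) * p ^ (-(p/2)) := by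
      rw [one_div, Real.div_rpow hp1.le hpp.le, Real.inv_rpow hp1.le, ← Real.rpow_neg hp1.le,
        div_eq_mul_inv, ← Real.rpow_neg hpp.le, ← mul_assoc, ← Real.rpow_add hp1,
        show -(p-1) + p/2 = 1 - p/2 by ring]
    have eL : 2 ^ (p-2) * (1/(p-1)) ^ (p-1) * (2 * ((p-1)/p) ^ (p/2) * B ^ (p/2-1))
        = 2 ^ (p-1) * ((p-1) ^ (1 - p/2) * p ^ (-(p/2)) * B ^ (p/2-1)) := by
      calc 2 ^ (p-2) * (1/(p-1)) ^ (p-1) * (2 * ((p-1)/p) ^ (p/2) * B ^ (p/2-1))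
          = (2 ^ (p-2) * 2) * ((1/(p-1)) ^ (p-1) * ((p-1)/p) ^ (p/2)) * B ^ (p/2-1) := by
            ring
        _ = 2 ^ (p-1) * ((p-1) ^ (1 - p/2) * p ^ (-(p/2)) * B ^ (p/2-1)) := by
            rw [e1, e2]; ring
    have hBle : B ≤ p * (p-1) := by nlinarith
    have hb : B ^ (p/2-1) ≤ p ^ (p/2-1) * (p-1) ^ (p/2-1) := by
      rw [← Real.mul_rpow hpp.le hp1.le]
      exact Real.rpow_le_rpow hB.le hBle (by linarith)
    have h2 : (p-1) ^ (1 - p/2) * p ^ (-(p/2)) * B ^ (p/2-1) ≤ 1/p := by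
      calc (p-1) ^ (1 - p/2) * p ^ (-(p/2)) * B ^ (p/2-1)
          ≤ (p-1) ^ (1 - p/2) * p ^ (-(p/2)) * (p ^ (p/2-1) * (p-1) ^ (p/2-1)) :=
            mul_le_mul_of_nonneg_left hb (by positivity)
        _ = ((p-1) ^ (1 - p/2) * (p-1) ^ (p/2-1)) * (p ^ (-(p/2)) * p ^ (p/2-1)) := by ring
        _ = (p-1) ^ ((1 - p/2) + (p/2-1)) * p ^ (-(p/2) + (p/2-1)) := by
            rw [Real.rpow_add hp1, Real.rpow_add hpp]
        _ = 1/p := by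
            rw [show (1 - p/2) + (p/2-1) = 0 by ring, show -(p/2) + (p/2-1) = -1 by ring,
              Real.rpow_zero, Real.rpow_neg_one, one_mul, one_div]
    have h1 : (2:ℝ) ^ (p-1) ≤ (2:ℝ) ^ (n:ℝ) :=
      (Real.rpow_le_rpow_left_iff (by norm_num : (1:ℝ) < 2)).mpr (by linarith)
    have hpx : 1/p ≤ 1/(n:ℝ) := one_div_le_one_div_of_le hxpos hp.le
    rw [eL]
    calc (2:ℝ) ^ (p-1) * ((p-1) ^ (1 - p/2) * p ^ (-(p/2)) * B ^ (p/2-1))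
        ≤ (2:ℝ) ^ (n:ℝ) * (1/(n:ℝ)) :=
          mul_le_mul h1 (h2.trans hpx) (by positivity) (by positivity)
      _ = (2:ℝ) ^ (n:ℝ) / (n:ℝ) := by ring
  calc 2 ^ (p-2) * (1/(p-1)) ^ (p-1) *
        (2 * ((p-1)/p) ^ (p/2) * (B ^ (p/2-1) * (p - (n:ℝ)) ^ (1 - p/2)))
      = (2 ^ (p-2) * (1/(p-1)) ^ (p-1) * (2 * ((p-1)/p) ^ (p/2) * B ^ (p/2-1)))
          * (p - (n:ℝ)) ^ (1 - p/2) := by ring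
    _ ≤ ((2:ℝ) ^ (n:ℝ) / (n:ℝ)) * (p - (n:ℝ)) ^ (1 - p/2) :=
        mul_le_mul_of_nonneg_right key hAnn
end

section
/- Let ℓ: ℝ → [0,∞) be a convex even C² function with ℓ(0) = 1 and ℓ'(t) = log t for t ≥ 2 (so ℓ''(t) = 1/t for t ≥ 2). Then for every integer n ≥ 3 there exists a constant γ > 0 (depending only on n and ℓ restricted to [0,2]) such that for all R ≥ 2: ∫_{-R}^{R} (ℓ''(t))^(n/2)·(ℓ(t))^(n/2 - 1) dt ≤ γ·(log R)^(n/2). -/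
open Real intervalIntegral

theorem stmt_10 (ℓ : ℝ → ℝ) (hconv : ConvexOn ℝ Set.univ ℓ) (heven : ∀ t, ℓ (-t) = ℓ t)
    (hC2 : ContDiff ℝ 2 ℓ) (hnonneg : ∀ t, 0 ≤ ℓ t) (h0 : ℓ 0 = 1)
    (hd : ∀ t : ℝ, 2 ≤ t → deriv ℓ t = Real.log t)
    (hd2 : ∀ t : ℝ, 2 ≤ t → deriv (deriv ℓ) t = 1 / t)
    (n : ℕ) (hn : 3 ≤ n) :
    ∃ γ > (0:ℝ), ∀ R : ℝ, 2 ≤ R →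
      ∫ t in (-R)..R, (deriv (deriv ℓ) t) ^ ((n : ℝ) / 2) * (ℓ t) ^ ((n : ℝ) / 2 - 1)
        ≤ γ * (Real.log R) ^ ((n : ℝ) / 2) := by
  set p : ℝ := (n : ℝ) / 2 with hpdef
  have hp1 : 1 ≤ p := by
    have : (3:ℝ) ≤ n := by exact_mod_cast hn
    simp only [hpdef]; linarith
  have hq0 : (0:ℝ) ≤ p - 1 := by linarith
  have hp0 : (0:ℝ) ≤ p := by linarith
  set f : ℝ → ℝ := fun t => (deriv (deriv ℓ) t) ^ p * (ℓ t) ^ (p - 1) with hfdef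
  -- continuity facts
  have hder : Differentiable ℝ ℓ := hC2.differentiable (by norm_num)
  have hcd : Continuous (deriv ℓ) := hC2.continuous_deriv (by norm_num)
  have hcd2 : Continuous (deriv (deriv ℓ)) := by
    have h2 : ContDiff ℝ ((1:ℕ) + 1) ℓ := by exact_mod_cast hC2
    have h1 : ContDiff ℝ 1 (deriv ℓ) := (contDiff_succ_iff_deriv.mp h2).2.2
    exact h1.continuous_deriv le_rfl
  have hℓc : Continuous ℓ := hC2.continuous
  have hfc : Continuous f := by
    apply Continuous.mul
    · exact hcd2.rpow_const fun x => Or.inr hp0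
    · exact hℓc.rpow_const fun x => Or.inr hq0
  have hfint : ∀ a b : ℝ, IntervalIntegrable f MeasureTheory.volume a b :=
    fun a b => hfc.intervalIntegrable a b
  -- evenness of f
  have hodd : ∀ t, deriv ℓ (-t) = -deriv ℓ t := by
    intro t
    have h1 : (fun s => ℓ (-s)) = ℓ := funext heven
    have h2 : deriv (fun s => ℓ (-s)) t = -deriv ℓ (-t) := deriv_comp_neg ℓ t
    rw [h1] at h2
    linarith
  have heven2 : ∀ t, deriv (deriv ℓ) (-t) = deriv (deriv ℓ) t := by
    intro t
    have h1 : (fun s => deriv ℓ (-s)) = fun s => -(deriv ℓ s) := funext fun s => hodd s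
    have h2 : deriv (fun s => deriv ℓ (-s)) t = -deriv (deriv ℓ) (-t) :=
      deriv_comp_neg (deriv ℓ) t
    rw [h1] at h2
    have h3 : deriv (fun s => -(deriv ℓ s)) t = -deriv (deriv ℓ) t := deriv.neg
    rw [h3] at h2
    linarith
  have hfeven : ∀ t, f (-t) = f t := by
    intro t
    simp only [hfdef, heven2, heven]
  -- upper bound on ℓ on [2, ∞)
  set M : ℝ := ℓ 2 + 1 with hMdef
  have hM1 : 1 ≤ M := by have := hnonneg 2; simp only [hMdef]; linarith
  have hlog2 : (0.6931471803 : ℝ) < Real.log 2 := Real.log_two_gt_d9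
  have hℓub : ∀ t : ℝ, 2 ≤ t → ℓ t ≤ M * (t * Real.log t) := by
    intro t ht
    have hft : ∫ s in (2:ℝ)..t, deriv ℓ s = ℓ t - ℓ 2 :=
      intervalIntegral.integral_deriv_eq_sub (fun s _ => hder s)
        (hcd.intervalIntegrable _ _)
    have hmono : ∫ s in (2:ℝ)..t, deriv ℓ s ≤ ∫ s in (2:ℝ)..t, Real.log t := by
      apply intervalIntegral.integral_mono_on ht (hcd.intervalIntegrable _ _)
        intervalIntegrable_const
      intro s hs
      rw [hd s hs.1]
      exact Real.log_le_log (by linarith [hs.1]) hs.2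
    rw [hft, intervalIntegral.integral_const, smul_eq_mul] at hmono
    have hlogt : Real.log 2 ≤ Real.log t := Real.log_le_log (by norm_num) ht
    have htlog1 : 1 ≤ t * Real.log t := by nlinarith
    have hℓ2 : 0 ≤ ℓ 2 := hnonneg 2
    have hltnn : 0 ≤ Real.log t := by linarith
    nlinarith [mul_nonneg (hnonneg 2) (sub_nonneg.mpr htlog1)]
  -- bound on [-2,2]
  obtain ⟨B, hB⟩ := (isCompact_Icc (a := (-2:ℝ)) (b := 2)).exists_bound_of_continuousOn
    hfc.continuousOn
  have hB0 : 0 ≤ B := le_trans (norm_nonneg (f 0)) (hB 0 (by norm_num))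
  have hmid : ∀ R : ℝ, 2 ≤ R → ∫ t in (-2:ℝ)..2, f t ≤ 4 * B := by
    intro R hR
    have h1 : ‖∫ t in (-2:ℝ)..2, f t‖ ≤ B * |(2:ℝ) - (-2)| :=
      intervalIntegral.norm_integral_le_of_norm_le_const fun x hx => by
        refine hB x ?_
        have : x ∈ Set.Ioc (-2:ℝ) 2 := by
          simpa [Set.uIoc_of_le (by norm_num : (-2:ℝ) ≤ 2)] using hx
        exact ⟨le_of_lt this.1, this.2⟩
    have h2 : ∫ t in (-2:ℝ)..2, f t ≤ ‖∫ t in (-2:ℝ)..2, f t‖ := le_abs_self _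
    have : |(2:ℝ) - (-2)| = 4 := by norm_num
    rw [this] at h1
    linarith
  -- choose γ
  refine ⟨2 * M ^ (p - 1) + 4 * B / (Real.log 2) ^ p + 1, ?_, ?_⟩
  · have h1 : (0:ℝ) < M ^ (p - 1) := Real.rpow_pos_of_pos (by linarith) _
    have h2 : (0:ℝ) < (Real.log 2) ^ p := Real.rpow_pos_of_pos (by linarith) _
    have h3 : 0 ≤ 4 * B / (Real.log 2) ^ p := by positivity
    linarith
  intro R hR
  have hlogR : Real.log 2 ≤ Real.log R := Real.log_le_log (by norm_num) hR
  have hlogRpos : 0 < Real.log R := by linarith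
  -- tail bound
  have htail : ∫ t in (2:ℝ)..R, f t ≤ M ^ (p - 1) * (Real.log R) ^ p := by
    have hptw : ∀ t ∈ Set.Icc (2:ℝ) R,
        f t ≤ (M ^ (p-1) * (Real.log R) ^ (p-1)) * t⁻¹ := by
      intro t ht
      have ht2 : (2:ℝ) ≤ t := ht.1
      have htpos : (0:ℝ) < t := by linarith
      have hltnn : 0 ≤ Real.log t := Real.log_nonneg (by linarith)
      have hltR : Real.log t ≤ Real.log R := Real.log_le_log htpos ht.2
      have e1 : f t = (t⁻¹) ^ p * (ℓ t) ^ (p - 1) := by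
        simp only [hfdef, hd2 t ht2, one_div]
      have e2 : (ℓ t) ^ (p-1) ≤ (M * (t * Real.log t)) ^ (p-1) :=
        Real.rpow_le_rpow (hnonneg t) (hℓub t ht2) hq0
      have e3 : (M * (t * Real.log t)) ^ (p-1)
          = M ^ (p-1) * (t ^ (p-1) * (Real.log t) ^ (p-1)) := by
        rw [Real.mul_rpow (by linarith) (by positivity),
          Real.mul_rpow (le_of_lt htpos) hltnn]
      have e4 : (t⁻¹) ^ p * t ^ (p-1) = t⁻¹ := by
        rw [Real.inv_rpow (le_of_lt htpos), ← Real.rpow_neg (le_of_lt htpos),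
          ← Real.rpow_add htpos]
        have : -p + (p - 1) = -1 := by ring
        rw [this, Real.rpow_neg_one]
      have hinvnn : (0:ℝ) ≤ (t⁻¹) ^ p := Real.rpow_nonneg (by positivity) _
      calc f t = (t⁻¹) ^ p * (ℓ t) ^ (p - 1) := e1
        _ ≤ (t⁻¹) ^ p * (M * (t * Real.log t)) ^ (p-1) := by
            exact mul_le_mul_of_nonneg_left e2 hinvnn
        _ = M ^ (p-1) * (Real.log t) ^ (p-1) * ((t⁻¹) ^ p * t ^ (p-1)) := by
            rw [e3]; ring
        _ = M ^ (p-1) * (Real.log t) ^ (p-1) * t⁻¹ := by rw [e4]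
        _ ≤ (M ^ (p-1) * (Real.log R) ^ (p-1)) * t⁻¹ := by
            have hMnn : (0:ℝ) ≤ M ^ (p-1) := Real.rpow_nonneg (by linarith) _
            have : (Real.log t) ^ (p-1) ≤ (Real.log R) ^ (p-1) :=
              Real.rpow_le_rpow hltnn hltR hq0
            have h4 : (0:ℝ) ≤ t⁻¹ := by positivity
            nlinarith [mul_nonneg hMnn (sub_nonneg.mpr this)]
    have hginto : IntervalIntegrable (fun t : ℝ => (M ^ (p-1) * (Real.log R) ^ (p-1)) * t⁻¹)
        MeasureTheory.volume 2 R := by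
      apply IntervalIntegrable.const_mul
      apply intervalIntegrable_inv
      · intro x hx
        rw [Set.uIcc_of_le (by linarith : (2:ℝ) ≤ R)] at hx
        have : (2:ℝ) ≤ x := hx.1
        linarith
      · exact continuousOn_id
    have h1 : ∫ t in (2:ℝ)..R, f t
        ≤ ∫ t in (2:ℝ)..R, (M ^ (p-1) * (Real.log R) ^ (p-1)) * t⁻¹ :=
      intervalIntegral.integral_mono_on hR (hfint _ _) hginto hptw
    have h2 : ∫ t in (2:ℝ)..R, (M ^ (p-1) * (Real.log R) ^ (p-1)) * t⁻¹
        = (M ^ (p-1) * (Real.log R) ^ (p-1)) * Real.log (R / 2) := by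
      rw [intervalIntegral.integral_const_mul, integral_inv]
      rw [Set.uIcc_of_le (by linarith : (2:ℝ) ≤ R)]
      intro hx
      exact absurd hx.1 (by norm_num)
    have h3 : Real.log (R / 2) ≤ Real.log R := by
      rw [Real.log_div (by linarith) (by norm_num)]
      linarith
    have h4 : (Real.log R) ^ (p-1) * Real.log R = (Real.log R) ^ p := by
      nth_rewrite 2 [show p = (p - 1) + 1 by ring]
      rw [Real.rpow_add hlogRpos, Real.rpow_one]
    have hMnn : (0:ℝ) ≤ M ^ (p-1) := Real.rpow_nonneg (by linarith) _
    have hLnn : (0:ℝ) ≤ (Real.log R) ^ (p-1) := Real.rpow_nonneg (le_of_lt hlogRpos) _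
    calc ∫ t in (2:ℝ)..R, f t
        ≤ (M ^ (p-1) * (Real.log R) ^ (p-1)) * Real.log (R / 2) := by rw [← h2]; exact h1
      _ ≤ (M ^ (p-1) * (Real.log R) ^ (p-1)) * Real.log R := by
          apply mul_le_mul_of_nonneg_left h3 (mul_nonneg hMnn hLnn)
      _ = M ^ (p-1) * (Real.log R) ^ p := by rw [mul_assoc, h4]
  -- left tail
  have hleft : ∫ t in (-R)..(-2:ℝ), f t = ∫ t in (2:ℝ)..R, f t := by
    have h1 : (∫ t in (2:ℝ)..R, f (-t)) = ∫ t in (-R)..(-2:ℝ), f t :=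
      intervalIntegral.integral_comp_neg f
    rw [← h1]
    exact intervalIntegral.integral_congr fun x _ => hfeven x
  -- split
  have hsplit : ∫ t in (-R)..R, f t
      = (∫ t in (-R)..(-2:ℝ), f t) + (∫ t in (-2:ℝ)..2, f t) + ∫ t in (2:ℝ)..R, f t := by
    rw [intervalIntegral.integral_add_adjacent_intervals (hfint _ _) (hfint _ _),
      intervalIntegral.integral_add_adjacent_intervals (hfint _ _) (hfint _ _)]
  have hlogp2 : (0:ℝ) < (Real.log 2) ^ p := Real.rpow_pos_of_pos (by linarith) _
  have hlogp : (Real.log 2) ^ p ≤ (Real.log R) ^ p :=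
    Real.rpow_le_rpow (by linarith) hlogR hp0
  have hLp : (0:ℝ) < (Real.log R) ^ p := Real.rpow_pos_of_pos hlogRpos _
  have hfinal := hmid R hR
  show ∫ t in (-R)..R, f t ≤ _
  rw [hsplit, hleft]
  have hBle' : 4 * B ≤ 4 * B / (Real.log 2) ^ p * (Real.log R) ^ p := by
    rw [div_mul_eq_mul_div, le_div_iff₀ hlogp2]
    nlinarith
  nlinarith [htail, hfinal]
end
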